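/- Jordan's lemma: for any two reflections R₀ and R₁ on a finite-dimensional Hilbert space H, there exists an orthogonal decomposition of H into subspaces each of dimension at most 2, each invariant under both R₀ and R₁. -/

import Mathlib

open scoped InnerProductSpace

open Module

lemma jordan_aux : ∀ (n : ℕ) (H : Type) [NormedAddCommGroup H] [InnerProductSpace ℂ H]
    [FiniteDimensional ℂ H], finrank ℂ H ≤ n →
    ∀ (R₀ R₁ : H →ₗ[ℂ] H),
    (∀ x y : H, ⟪R₀ x, y⟫_ℂ = ⟪x, R₀ y⟫_ℂ) → (∀ x, R₀ (R₀ x) = x) →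
    (∀ x y : H, ⟪R₁ x, y⟫_ℂ = ⟪x, R₁ y⟫_ℂ) → (∀ x, R₁ (R₁ x) = x) →
    ∃ (k : ℕ) (S : Fin k → Submodule ℂ H),
      (∀ i, finrank ℂ (S i) ≤ 2) ∧
      (∀ i j, i ≠ j → ∀ x ∈ S i, ∀ y ∈ S j, ⟪x, y⟫_ℂ = 0) ∧
      (⨆ i, S i) = ⊤ ∧
      (∀ i, ∀ x ∈ S i, R₀ x ∈ S i ∧ R₁ x ∈ S i) := by
  intro n
  induction n with
  | zero =>
    intro H _ _ _ hrank R₀ R₁ _ _ _ _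
    refine ⟨0, fun i => ⊥, by simp, by simp, ?_, by simp⟩
    have : Subsingleton H := by
      rw [← finrank_zero_iff (R := ℂ)]; omega
    exact Subsingleton.elim _ _
  | succ n ih =>
    intro H _ _ _ hrank R₀ R₁ h₀s h₀2 h₁s h₁2
    classical
    by_cases hz : finrank ℂ H = 0
    · refine ⟨0, fun i => ⊥, by simp, by simp, ?_, by simp⟩
      have : Subsingleton H := by rw [← finrank_zero_iff (R := ℂ)]; exact hz
      exact Subsingleton.elim _ _
    · have : Nontrivial H := by
        rw [← finrank_pos_iff (R := ℂ)]; omega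
      -- eigenvector of R₀ ∘ R₁
      obtain ⟨μ, hμ⟩ := Module.End.exists_eigenvalue (K := ℂ) (R₀ ∘ₗ R₁)
      obtain ⟨u, hu⟩ := hμ.exists_hasEigenvector
      have hu0 : u ≠ 0 := hu.right
      have hue : R₀ (R₁ u) = μ • u := hu.apply_eq_smul
      have hμ0 : μ ≠ 0 := by
        intro h
        apply hu0
        have : R₀ (R₁ u) = 0 := by rw [hue, h, zero_smul]
        have := congrArg (fun z => R₁ (R₀ z)) this
        simpa [h₀2, h₁2] using this
      set W : Submodule ℂ H := Submodule.span ℂ {u, R₁ u} with hW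
      have huW : u ∈ W := Submodule.subset_span (by simp)
      have hR₁uW : R₁ u ∈ W := Submodule.subset_span (by simp)
      have hR₀u : R₀ u = μ⁻¹ • R₁ u := by
        have h : μ • R₀ u = R₁ u := by
          have := congrArg R₀ hue
          rw [h₀2, map_smul] at this
          exact this.symm
        rw [← h, inv_smul_smul₀ hμ0]
      have hWinv₀ : ∀ x ∈ W, R₀ x ∈ W := by
        intro x hx
        have : W.map R₀ ≤ W := by
          rw [hW, Submodule.map_span_le]
          rintro m (rfl | rfl)
          · rw [hR₀u]; exact W.smul_mem _ hR₁uW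
          · rw [hue]; exact W.smul_mem _ huW
        exact this ⟨x, hx, rfl⟩
      have hWinv₁ : ∀ x ∈ W, R₁ x ∈ W := by
        intro x hx
        have : W.map R₁ ≤ W := by
          rw [hW, Submodule.map_span_le]
          rintro m (rfl | rfl)
          · exact hR₁uW
          · rw [h₁2]; exact huW
        exact this ⟨x, hx, rfl⟩
      have hWrank : finrank ℂ W ≤ 2 := by
        have h1 : W = Submodule.span ℂ ((({u, R₁ u} : Finset H) : Set H)) := by
          rw [hW]; congr 1; simp
        have h2 := finrank_span_finset_le_card (R := ℂ) ({u, R₁ u} : Finset H)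
        rw [Set.finrank] at h2
        rw [h1]
        exact h2.trans ((Finset.card_insert_le _ _).trans (by simp))
      have hWpos : 1 ≤ finrank ℂ W := by
        have : W ≠ ⊥ := by
          intro h; apply hu0; simpa [h] using huW
        rw [Nat.one_le_iff_ne_zero, ← Nat.pos_iff_ne_zero, finrank_pos_iff (R := ℂ)]
        exact nontrivial_of_ne ⟨u, huW⟩ 0 (by simp [hu0])
      -- orthogonal complement
      have horthinv₀ : ∀ x ∈ Wᗮ, R₀ x ∈ Wᗮ := by
        intro x hx
        rw [Submodule.mem_orthogonal]
        intro w hw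
        have : ⟪R₀ x, w⟫_ℂ = ⟪x, R₀ w⟫_ℂ := h₀s x w
        calc ⟪w, R₀ x⟫_ℂ = starRingEnd ℂ ⟪R₀ x, w⟫_ℂ := (inner_conj_symm _ _).symm
          _ = starRingEnd ℂ ⟪x, R₀ w⟫_ℂ := by rw [this]
          _ = ⟪R₀ w, x⟫_ℂ := inner_conj_symm _ _
          _ = 0 := (Submodule.mem_orthogonal _ _).1 hx _ (hWinv₀ w hw)
      have horthinv₁ : ∀ x ∈ Wᗮ, R₁ x ∈ Wᗮ := by
        intro x hx
        rw [Submodule.mem_orthogonal]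
        intro w hw
        calc ⟪w, R₁ x⟫_ℂ = starRingEnd ℂ ⟪R₁ x, w⟫_ℂ := (inner_conj_symm _ _).symm
          _ = starRingEnd ℂ ⟪x, R₁ w⟫_ℂ := by rw [h₁s x w]
          _ = ⟪R₁ w, x⟫_ℂ := inner_conj_symm _ _
          _ = 0 := (Submodule.mem_orthogonal _ _).1 hx _ (hWinv₁ w hw)
      set R₀' : Wᗮ →ₗ[ℂ] Wᗮ := R₀.restrict horthinv₀ with hR₀'
      set R₁' : Wᗮ →ₗ[ℂ] Wᗮ := R₁.restrict horthinv₁ with hR₁'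
      have hrank' : finrank ℂ Wᗮ ≤ n := by
        have := W.finrank_add_finrank_orthogonal
        omega
      obtain ⟨k, S', hS'rank, hS'orth, hS'top, hS'inv⟩ :=
        ih Wᗮ hrank' R₀' R₁'
          (fun x y => h₀s x y) (fun x => Subtype.ext (h₀2 x))
          (fun x y => h₁s x y) (fun x => Subtype.ext (h₁2 x))
      refine ⟨k + 1, Fin.cons W (fun i => (S' i).map Wᗮ.subtype), ?_, ?_, ?_, ?_⟩
      · intro i
        refine Fin.cases ?_ ?_ i
        · exact hWrank
        · intro j
          rw [show (Fin.cons W (fun i => (S' i).map Wᗮ.subtype) : Fin (k+1) → Submodule ℂ H) j.succ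
              = (S' j).map Wᗮ.subtype from Fin.cons_succ _ _ _,
            Submodule.finrank_map_subtype_eq]
          exact hS'rank j
      · intro i j
        induction i using Fin.cases with
        | zero =>
          induction j using Fin.cases with
          | zero => intro hij; exact absurd rfl hij
          | succ j' =>
            intro _ x hx y hy
            simp only [Fin.cons_succ] at hy
            obtain ⟨y', hy', rfl⟩ := hy
            simp only [Fin.cons_zero] at hx
            simp only [Submodule.coe_subtype]
            exact (Submodule.mem_orthogonal _ _).1 y'.2 x hx
        | succ i' =>
          induction j using Fin.cases with
          | zero =>
            intro _ x hx y hy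
            simp only [Fin.cons_succ] at hx
            obtain ⟨x', hx', rfl⟩ := hx
            simp only [Fin.cons_zero] at hy
            simp only [Submodule.coe_subtype]
            have h0 : ⟪y, (x' : H)⟫_ℂ = 0 :=
              (Submodule.mem_orthogonal _ _).1 x'.2 y hy
            rw [← inner_conj_symm, h0, map_zero]
          | succ j' =>
            intro hij x hx y hy
            have hij' : i' ≠ j' := fun h => hij (congrArg Fin.succ h)
            simp only [Fin.cons_succ] at hx hy
            obtain ⟨x', hx', rfl⟩ := hx
            obtain ⟨y', hy', rfl⟩ := hy
            exact hS'orth i' j' hij' x' hx' y' hy'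
      · apply le_antisymm le_top
        have hsup : W ⊔ Wᗮ = ⊤ := Submodule.sup_orthogonal_of_hasOrthogonalProjection
        rw [← hsup]
        apply sup_le
        · exact le_iSup (Fin.cons W fun i => (S' i).map Wᗮ.subtype) 0
        · have hmap : (⨆ i, (S' i).map Wᗮ.subtype) = Wᗮ := by
            rw [← Submodule.map_iSup, hS'top, Submodule.map_subtype_top]
          refine le_trans (le_of_eq hmap.symm) (iSup_le fun i => ?_)
          exact le_iSup_of_le i.succ (by rw [Fin.cons_succ])
      · intro i
        refine Fin.cases ?_ ?_ i
        · intro x hx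
          simp only [Fin.cons_zero] at hx ⊢
          exact ⟨hWinv₀ x hx, hWinv₁ x hx⟩
        · intro i' x hx
          simp only [Fin.cons_succ] at hx ⊢
          obtain ⟨x', hx', rfl⟩ := hx
          obtain ⟨h1, h2⟩ := hS'inv i' x' hx'
          exact ⟨⟨R₀' x', h1, rfl⟩, ⟨R₁' x', h2, rfl⟩⟩

/-- Jordan's lemma: for any two reflections `R₀, R₁` on a
finite-dimensional Hilbert space, there is an orthogonal decomposition into
subspaces of dimension at most `2`, each invariant under both `R₀` and `R₁`. -/
theorem stmt_16 {n : ℕ}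
    (R₀ R₁ : EuclideanSpace ℂ (Fin n) →ₗ[ℂ] EuclideanSpace ℂ (Fin n))
    (hR₀sa : LinearMap.adjoint R₀ = R₀) (hR₀2 : R₀ ∘ₗ R₀ = LinearMap.id)
    (hR₁sa : LinearMap.adjoint R₁ = R₁) (hR₁2 : R₁ ∘ₗ R₁ = LinearMap.id) :
    ∃ (ι : Type) (_ : Fintype ι) (S : ι → Submodule ℂ (EuclideanSpace ℂ (Fin n))),
      (∀ i, Module.finrank ℂ (S i) ≤ 2) ∧
      (∀ i j, i ≠ j → ∀ x ∈ S i, ∀ y ∈ S j, ⟪x, y⟫_ℂ = 0) ∧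
      (⨆ i, S i) = ⊤ ∧
      (∀ i, ∀ x ∈ S i, R₀ x ∈ S i ∧ R₁ x ∈ S i) := by
  obtain ⟨k, S, h1, h2, h3, h4⟩ :=
    jordan_aux n (EuclideanSpace ℂ (Fin n))
      (le_of_eq (finrank_euclideanSpace_fin)) R₀ R₁
      (fun x y => by conv_lhs => rw [← hR₀sa]
                     exact LinearMap.adjoint_inner_left R₀ y x)
      (fun x => by rw [← LinearMap.comp_apply, hR₀2, LinearMap.id_apply])
      (fun x y => by conv_lhs => rw [← hR₁sa]
                     exact LinearMap.adjoint_inner_left R₁ y x)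
      (fun x => by rw [← LinearMap.comp_apply, hR₁2, LinearMap.id_apply])
  exact ⟨Fin k, inferInstance, S, h1, h2, h3, h4⟩
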